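/- Let 0 < L < R be reals with 2*(R - L)^2 != R^2, and let K, J be reals. Then the asymmetric second-twist expression tau2a(L, R0, R1, K0, K1, J0, J1) (defined in the context, with k = 0) evaluated at R0 = R1 = R, K0 = K1 = K, J0 = J1 = J equals 3*(7R^2 - 8RL + 2L^2)/(128*R^2*(R - L)*sqrt(L*(2R - L))) - L*(27R^2 - 40RL + 10L^2)*K/(192*R*(R - L)*(2R - L)*sqrt(L*(2R - L))) + L^2*(31R^2 - 36RL + 6L^2)*K^2/(384*(R - L)*(2R - L)^2*sqrt(L*(2R - L))) - L^2*R*J/(96*(2R - L)*sqrt(L*(2R - L))). -/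

import Mathlib

/-- The polynomial `N(L, R0, R1)` from the asymmetric second twist coefficient formula. -/
def Npoly (L R0 R1 : ℝ) : ℝ :=
  8 * L ^ 4 * (R0 ^ 2 + R1 ^ 2)
    - 16 * L ^ 3 * (R0 ^ 3 + 2 * R0 ^ 2 * R1 + 2 * R0 * R1 ^ 2 + R1 ^ 3)
    + 8 * L ^ 2 * (R0 + R1) ^ 2 * (R0 ^ 2 + 4 * R0 * R1 + R1 ^ 2)
    - 8 * L * R0 * R1 * (2 * R0 ^ 3 + 7 * R0 ^ 2 * R1 + 7 * R0 * R1 ^ 2 + 2 * R1 ^ 3)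
    + 7 * R0 ^ 2 * R1 ^ 2 * (R0 + R1) ^ 2

/-- The polynomial `P(L, R0, R1)` from the asymmetric second twist coefficient formula. -/
def Ppoly (L R0 R1 : ℝ) : ℝ :=
  L ^ 2 * (R1 - L) ^ 4 * (48 * R0 ^ 3 * (R1 - 2 * L) + 24 * L ^ 2 * (R1 - L) ^ 2
    - 72 * L * R0 * (R1 - L) * (R1 - 2 * L)
    + R0 ^ 2 * (216 * L ^ 2 - 216 * R1 * L + 31 * R1 ^ 2))

/-- The polynomial `Q(L, R0, R1)` from the asymmetric second twist coefficient formula. -/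
def Qpoly (L R0 R1 : ℝ) : ℝ :=
  -(L ^ 2) * R0 * R1 * (32 * L ^ 2 + 17 * R0 * R1 - 32 * L * (R0 + R1))

/-- The polynomial `S(L, R0, R1)` from the asymmetric second twist coefficient formula. -/
def Spoly (L R0 R1 : ℝ) : ℝ :=
  L * (R1 - L) ^ 2 * (40 * (R1 - L) ^ 2 * L ^ 2 + 3 * R0 ^ 3 * (9 * R1 - 16 * L)
    - 80 * R0 * (2 * L ^ 2 - 3 * R1 * L + R1 ^ 2) * L
    + 3 * R0 ^ 2 * (56 * L ^ 2 - 56 * R1 * L + 9 * R1 ^ 2))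

/-- The polynomial `T(L, R0, R1)` from the asymmetric second twist coefficient formula. -/
def Tpoly (L R0 R1 : ℝ) : ℝ := L ^ 2 * R0 * (R1 - L) ^ 2

/-- The asymmetric second twist coefficient `τ₂(F², P)` (case `k = 0`, i.e.
`0 < L < min(R0, R1)`) of the squared billiard map along the elliptic period-2 orbit of
a two-arc billiard table, where `K0, K1` are the second and `J0, J1` the fourth
arclength derivatives of the radii of curvature at the bounce points. -/
noncomputable def tau2a (L R0 R1 K0 K1 J0 J1 : ℝ) : ℝ :=
  (1 / Real.sqrt (L * (R0 - L) * (R1 - L) * (R0 + R1 - L))) *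
    (3 * Npoly L R0 R1
        / (512 * R0 ^ 2 * R1 ^ 2 * (2 * (R0 - L) * (R1 - L) - R0 * R1))
      + (Ppoly L R0 R1 * K0 ^ 2 + Ppoly L R1 R0 * K1 ^ 2)
        / (1536 * (R0 - L) ^ 2 * (R1 - L) ^ 2 * (R0 + R1 - L) ^ 2
            * (2 * (R0 - L) * (R1 - L) - R0 * R1))
      + Qpoly L R0 R1 * K0 * K1
        / (768 * (R0 + R1 - L) ^ 2 * (2 * (R0 - L) * (R1 - L) - R0 * R1))
      - (Spoly L R0 R1 * R1 * K0 + Spoly L R1 R0 * R0 * K1)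
        / (768 * R0 * R1 * (R0 - L) * (R1 - L) * (R0 + R1 - L)
            * (2 * (R0 - L) * (R1 - L) - R0 * R1))
      - (Tpoly L R0 R1 * (R1 - L) * J0 + Tpoly L R1 R0 * (R0 - L) * J1)
        / (192 * (R0 - L) * (R1 - L) * (R0 + R1 - L)))

set_option maxHeartbeats 4000000 in
/-- specializing the asymmetric second twist coefficient to a symmetric
table (`R0 = R1 = R`, `K0 = K1 = K`, `J0 = J1 = J`) recovers the symmetric formula. -/
theorem tau2a_symmetric_specialization (L R K J : ℝ)
    (hL : 0 < L) (hLR : L < R) (hres : 2 * (R - L) ^ 2 ≠ R ^ 2) :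
    tau2a L R R K K J J =
      3 * (7 * R ^ 2 - 8 * R * L + 2 * L ^ 2)
        / (128 * R ^ 2 * (R - L) * Real.sqrt (L * (2 * R - L)))
      - L * (27 * R ^ 2 - 40 * R * L + 10 * L ^ 2) * K
        / (192 * R * (R - L) * (2 * R - L) * Real.sqrt (L * (2 * R - L)))
      + L ^ 2 * (31 * R ^ 2 - 36 * R * L + 6 * L ^ 2) * K ^ 2
        / (384 * (R - L) * (2 * R - L) ^ 2 * Real.sqrt (L * (2 * R - L)))
      - L ^ 2 * R * J / (96 * (2 * R - L) * Real.sqrt (L * (2 * R - L))) := by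
  have hRL : (0:ℝ) < R - L := by linarith
  have h2RL : (0:ℝ) < 2 * R - L := by linarith
  have hR : (0:ℝ) < R := lt_trans hL hLR
  have hs : (0:ℝ) < Real.sqrt (L * (2 * R - L)) := Real.sqrt_pos.mpr (by positivity)
  have key : Real.sqrt (L * (R - L) * (R - L) * (R + R - L))
      = (R - L) * Real.sqrt (L * (2 * R - L)) := by
    rw [show L * (R - L) * (R - L) * (R + R - L) = (R - L) ^ 2 * (L * (2 * R - L)) by ring,
      Real.sqrt_mul (by positivity), Real.sqrt_sq hRL.le]
  have hres' : 2 * (R - L) * (R - L) - R * R ≠ 0 := by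
    intro h; apply hres; nlinarith [h]
  unfold tau2a Npoly Ppoly Qpoly Spoly Tpoly
  rw [key]
  set s := Real.sqrt (L * (2 * R - L)) with hsdef
  have hs0 : s ≠ 0 := ne_of_gt hs
  have hRL0 : R - L ≠ 0 := ne_of_gt hRL
  have h2RL0 : 2 * R - L ≠ 0 := ne_of_gt h2RL
  have hR0 : R ≠ 0 := ne_of_gt hR
  have hRRL0 : R + R - L ≠ 0 := by linarith
  have hD : 2 * (R - L) * (R - L) - R * R = R ^ 2 - 4 * R * L + 2 * L ^ 2 := by ring
  have hRR : R + R - L = 2 * R - L := by ring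
  rw [hD, hRR]
  rw [hD] at hres'
  generalize hDg : R ^ 2 - 4 * R * L + 2 * L ^ 2 = D at *
  field_simp
  rw [← hDg]
  ring
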